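/- Let A be a total order (axis) on a finite candidate set C and let V be a strict partial order on C. If V contains neither a u-valley nor a v-valley with respect to A, then V can be extended to a strict total order V' on C such that V' contains no v-valley with respect to A (i.e., V' is single-peaked with respect to A). -/

import Mathlib

def VValley {C : Type*} (A V : C → C → Prop) : Prop :=
  ∃ c1 c2 c3 : C, A c1 c2 ∧ A c2 c3 ∧ V c1 c2 ∧ V c3 c2

def UValley {C : Type*} (A V : C → C → Prop) : Prop :=
  ∃ a b c d : C, a ≠ b ∧ a ≠ c ∧ a ≠ d ∧ b ≠ c ∧ b ≠ d ∧ c ≠ d ∧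
    A a b ∧ A b d ∧ A a c ∧ A c d ∧ V a b ∧ V d c

def Extends {C : Type*} (V T : C → C → Prop) : Prop :=
  ∀ x y, V x y → T x y

/-- `V` is a strict partial order: asymmetric and transitive. -/
def IsSPO {C : Type*} (V : C → C → Prop) : Prop :=
  (∀ x y, V x y → ¬ V y x) ∧ (∀ x y z, V x y → V y z → V x z)

/-- `V` is a strict weak order: a strict partial order with transitive incomparability. -/
def IsSWO {C : Type*} (V : C → C → Prop) : Prop :=
  IsSPO V ∧ ∀ x y z, (¬ V x y ∧ ¬ V y x) → (¬ V y z ∧ ¬ V z y) → (¬ V x z ∧ ¬ V z x)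

/-- `V` possibly single-peaked w.r.t. axis `A`: it extends to a total order with no v-valley. -/
def PossSP {C : Type*} (A V : C → C → Prop) : Prop :=
  ∃ T : C → C → Prop, IsStrictTotalOrder C T ∧ Extends V T ∧ ¬ VValley A T

open scoped Classical


section
variable {C : Type*} (A V : C → C → Prop)

lemma Aasym (hA : IsStrictTotalOrder C A) {x y : C} (h : A x y) : ¬ A y x := by
  intro h'
  exact hA.irrefl x (hA.trans _ _ _ h h')

/-- Among a nonempty finite set, some axis-endpoint beats nobody in the set. -/
lemma safe_endpoint (hA : IsStrictTotalOrder C A) (hV : IsSPO V)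
    (hnu : ¬ UValley A V) (hnv : ¬ VValley A V)
    (S : Finset C) (hS : S.Nonempty) :
    ∃ e ∈ S, ((∀ x ∈ S, x ≠ e → A e x) ∨ (∀ x ∈ S, x ≠ e → A x e)) ∧
      ∀ y ∈ S, ¬ V e y := by
  letI : LinearOrder C := linearOrderOfSTO A
  have hlt : ∀ x y : C, x < y ↔ A x y := fun x y => Iff.rfl
  obtain ⟨l, hlS, hlmin⟩ := S.exists_min_image id hS
  obtain ⟨r, hrS, hrmax⟩ := S.exists_max_image id hS
  have hlA : ∀ x ∈ S, x ≠ l → A l x := by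
    intro x hx hne
    exact lt_of_le_of_ne (hlmin x hx) (Ne.symm hne)
  have hrA : ∀ x ∈ S, x ≠ r → A x r := by
    intro x hx hne
    exact lt_of_le_of_ne (hrmax x hx) hne
  by_cases hl : ∀ y ∈ S, ¬ V l y
  · exact ⟨l, hlS, Or.inl hlA, hl⟩
  by_cases hr : ∀ y ∈ S, ¬ V r y
  · exact ⟨r, hrS, Or.inr hrA, hr⟩
  exfalso
  push_neg at hl hr
  obtain ⟨b, hbS, hVlb⟩ := hl
  obtain ⟨c, hcS, hVrc⟩ := hr
  have hbl : b ≠ l := fun h => hV.1 _ _ hVlb (h ▸ hVlb)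
  have hcr : c ≠ r := fun h => hV.1 _ _ hVrc (h ▸ hVrc)
  have hAlb : A l b := hlA b hbS hbl
  have hAcr : A c r := hrA c hcS hcr
  have hlr : l ≠ r := by
    intro h
    subst h
    exact Aasym A hA hAlb (hrA b hbS hbl)
  by_cases hbr : b = r
  · subst hbr
    by_cases hcl : c = l
    · subst hcl
      exact hV.1 _ _ hVlb hVrc
    · have hVlc : V l c := hV.2 _ _ _ hVlb hVrc
      exact hnv ⟨l, c, b, hlA c hcS hcl, hAcr, hVlc, hVrc⟩
  · by_cases hcl : c = l
    · subst hcl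
      have hVrb : V r b := hV.2 _ _ _ hVrc hVlb
      exact hnv ⟨c, b, r, hAlb, hrA b hbS hbr, hVlb, hVrb⟩
    · by_cases hbc : b = c
      · subst hbc
        exact hnv ⟨l, b, r, hAlb, hrA b hbS hbr, hVlb, hVrc⟩
      · exact hnu ⟨l, b, c, r, Ne.symm hbl, Ne.symm hcl, hlr, hbc, hbr, hcr,
          hAlb, hrA b hbS hbr, hlA c hcS hcl, hAcr, hVlb, hVrc⟩
end

section
variable {C : Type*} (A V : C → C → Prop)

lemma rank_exists (hA : IsStrictTotalOrder C A) (hV : IsSPO V)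
    (hnu : ¬ UValley A V) (hnv : ¬ VValley A V) :
    ∀ (n : ℕ) (S : Finset C), S.card = n →
      ∃ r : C → ℕ,
        (∀ x ∈ S, ∀ y ∈ S, x ≠ y → r x ≠ r y) ∧
        (∀ x ∈ S, ∀ y ∈ S, V x y → r y < r x) ∧
        (∀ c1 ∈ S, ∀ c2 ∈ S, ∀ c3 ∈ S, A c1 c2 → A c2 c3 →
          ¬ (r c2 < r c1 ∧ r c2 < r c3)) := by
  intro n
  induction n with
  | zero =>
    intro S hS
    rw [Finset.card_eq_zero] at hS
    subst hS
    exact ⟨fun _ => 0, by simp, by simp, by simp⟩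
  | succ n ih =>
    intro S hS
    have hSne : S.Nonempty := by
      rw [← Finset.card_pos, hS]; omega
    obtain ⟨e, heS, hend, hbot⟩ := safe_endpoint A V hA hV hnu hnv S hSne
    have hcard : (S.erase e).card = n := by
      rw [Finset.card_erase_of_mem heS, hS]; omega
    obtain ⟨r', hinj', hext', hvv'⟩ := ih (S.erase e) hcard
    refine ⟨fun x => if x = e then 0 else r' x + 1, ?_, ?_, ?_⟩
    · intro x hx y hy hxy
      by_cases hxe : x = e <;> by_cases hye : y = e <;> simp [hxe, hye]
      · exact hxy (hxe.trans hye.symm)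
      · exact hinj' x (Finset.mem_erase.mpr ⟨hxe, hx⟩) y (Finset.mem_erase.mpr ⟨hye, hy⟩) hxy
    · intro x hx y hy hxy
      have hxe : x ≠ e := by
        rintro rfl; exact hbot y hy hxy
      by_cases hye : y = e
      · simp [hxe, hye]
      · simp only [hxe, hye, if_false]
        have := hext' x (Finset.mem_erase.mpr ⟨hxe, hx⟩) y (Finset.mem_erase.mpr ⟨hye, hy⟩) hxy
        omega
    · intro c1 h1 c2 h2 c3 h3 hA12 hA23
      have h12 : c1 ≠ c2 := by rintro rfl; exact hA.irrefl _ hA12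
      have h23 : c2 ≠ c3 := by rintro rfl; exact hA.irrefl _ hA23
      by_cases h2e : c2 = e
      · subst h2e
        rcases hend with hL | hR
        · exact absurd (hL c1 h1 h12) (Aasym A hA hA12)
        · exact absurd (hR c3 h3 h23.symm) (Aasym A hA hA23)
      · by_cases h1e : c1 = e
        · simp [h1e, h2e]
        · by_cases h3e : c3 = e
          · simp [h3e, h2e]
          · simp only [h1e, h2e, h3e, if_false]
            have := hvv' c1 (Finset.mem_erase.mpr ⟨h1e, h1⟩) c2 (Finset.mem_erase.mpr ⟨h2e, h2⟩)
              c3 (Finset.mem_erase.mpr ⟨h3e, h3⟩) hA12 hA23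
            omega
end


theorem stmt2 {C : Type*} [Fintype C] (A V : C → C → Prop)
    (hA : IsStrictTotalOrder C A) (hV : IsSPO V)
    (hnu : ¬ UValley A V) (hnv : ¬ VValley A V) :
    ∃ V' : C → C → Prop, IsStrictTotalOrder C V' ∧ Extends V V' ∧ ¬ VValley A V' := by
  obtain ⟨r, hinj, hext, hvv⟩ := rank_exists A V hA hV hnu hnv (Finset.univ.card) Finset.univ rfl
  refine ⟨fun x y => r y < r x, ?_, ?_, ?_⟩
  · refine { trichotomous := ?_, irrefl := fun a => lt_irrefl _, trans := fun a b c h1 h2 => lt_trans h2 h1 }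
    intro x y
    rcases lt_trichotomy (r x) (r y) with h | h | h
    · exact fun _ h' => absurd h h'
    · exact fun _ _ => (by
        by_contra hne
        exact hinj x (Finset.mem_univ x) y (Finset.mem_univ y) hne h)
    · exact fun h' _ => absurd h h'
  · intro x y hxy
    exact hext x (Finset.mem_univ x) y (Finset.mem_univ y) hxy
  · rintro ⟨c1, c2, c3, hA12, hA23, h1, h2⟩
    exact hvv c1 (Finset.mem_univ c1) c2 (Finset.mem_univ c2) c3 (Finset.mem_univ c3)
      hA12 hA23 ⟨h1, h2⟩
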